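/- Let C be a connected nodal curve with irreducible components C₁,…,Cₘ of which C₁,…,C_k are contracted by a map f whose image Σ has normalisation the disjoint union of the normalisations of C_{k+1},…,C_m. Writing d for the number of nodes of C, the arithmetic genus of C satisfies g(C) − g(Σ̄) = Σ_{i=1}^{k}(g(C̄ᵢ) − 1) + d, where g(C̄ᵢ) are the genera of the normalisations of the components and g(Σ̄) is the geometric genus of the image. In particular, if each contracted component of genus 0 contains at least 3 nodes, each contracted component of genus 1 contains at least 1 node, then g(C) ≥ g(Σ̄), with equality only if there are no contracted components and no nodes. -/

import Mathlib

open Finset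

/-- Genus bookkeeping for a connected nodal curve with `m` components, the first
`k` of which are contracted.  `g i` is the genus of the normalisation of the
`i`-th component, `d` the number of nodes, `branches i` the number of preimages of
nodes on the `i`-th normalised component (so `∑ branches ≤ 2d`).

Then `g(C) − g(Σ̄) = ∑_{i<k}(g(C̄ᵢ) − 1) + d`, and if each contracted rational
component contains at least 3 node branches and each contracted genus-one
component at least 1, then `g(C) ≥ g(Σ̄)`, with equality only if there are no
contracted components and no nodes. -/
theorem genus_of_contraction (m k : ℕ) (hk : k ≤ m) (d : ℕ)
    (g : Fin m → ℤ) (hg : ∀ i, 0 ≤ g i)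
    (branches : Fin m → ℕ)
    (hbr : (∑ i ∈ univ.filter (fun i : Fin m => (i : ℕ) < k), branches i) ≤ 2 * d)
    (h0 : ∀ i : Fin m, (i : ℕ) < k → g i = 0 → 3 ≤ branches i)
    (h1 : ∀ i : Fin m, (i : ℕ) < k → g i = 1 → 1 ≤ branches i)
    (gC gSigma : ℤ)
    (hgC : gC - 1 = (∑ i, (g i - 1)) + d)
    (hgSigma : gSigma - 1 = ∑ i ∈ univ.filter (fun i : Fin m => k ≤ (i : ℕ)), (g i - 1)) :
    gC - gSigma = (∑ i ∈ univ.filter (fun i : Fin m => (i : ℕ) < k), (g i - 1)) + d ∧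
    gSigma ≤ gC ∧
    (gC = gSigma → k = 0 ∧ d = 0) := by
  set S := univ.filter (fun i : Fin m => (i : ℕ) < k) with hS
  have hsplit : (∑ i, (g i - 1)) =
      (∑ i ∈ S, (g i - 1)) + ∑ i ∈ univ.filter (fun i : Fin m => k ≤ (i : ℕ)), (g i - 1) := by
    rw [hS, ← Finset.sum_filter_add_sum_filter_not univ (fun i : Fin m => (i : ℕ) < k)]
    congr 1
    apply Finset.sum_congr _ (fun _ _ => rfl)
    ext i; simp [not_lt]
  have heq : gC - gSigma = (∑ i ∈ S, (g i - 1)) + d := by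
    have := hgC
    rw [hsplit, ← hgSigma] at this
    linarith
  -- key pointwise bound
  have hpt : ∀ i ∈ S, (1 : ℤ) ≤ 2 * (g i - 1) + branches i := by
    intro i hi
    have hik : (i : ℕ) < k := by simpa [hS] using hi
    have hgi := hg i
    rcases lt_or_ge (g i) 2 with h2 | h2
    · interval_cases h : (g i)
      · have := h0 i hik h; push_cast; omega
      · have := h1 i hik h; push_cast; omega
    · have : (0 : ℤ) ≤ (branches i : ℤ) := Int.natCast_nonneg _
      linarith
  have hcard : (S.card : ℤ) ≤ 2 * (∑ i ∈ S, (g i - 1)) + 2 * d := by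
    have h1' : (S.card : ℤ) ≤ ∑ i ∈ S, (2 * (g i - 1) + branches i) := by
      calc (S.card : ℤ) = ∑ _i ∈ S, (1 : ℤ) := by simp
        _ ≤ _ := Finset.sum_le_sum hpt
    have h2' : ∑ i ∈ S, (2 * (g i - 1) + (branches i : ℤ))
        = 2 * (∑ i ∈ S, (g i - 1)) + ∑ i ∈ S, (branches i : ℤ) := by
      rw [Finset.sum_add_distrib, Finset.mul_sum]
    have h3' : (∑ i ∈ S, (branches i : ℤ)) ≤ 2 * d := by
      have := hbr
      push_cast [← Nat.cast_sum]
      exact_mod_cast this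
    linarith
  have hnonneg : 0 ≤ (∑ i ∈ S, (g i - 1)) + d := by
    have : (0 : ℤ) ≤ S.card := Int.natCast_nonneg _
    linarith
  refine ⟨heq, by linarith, ?_⟩
  intro hEq
  have hzero : (∑ i ∈ S, (g i - 1)) + d = 0 := by linarith
  have hScard : S.card = 0 := by
    have : (S.card : ℤ) ≤ 0 := by linarith
    omega
  have hk0 : k = 0 := by
    by_contra hk0
    have hm : 0 < m := lt_of_lt_of_le (Nat.pos_of_ne_zero hk0) hk
    have : (⟨0, hm⟩ : Fin m) ∈ S := by
      simp [hS, Nat.pos_of_ne_zero hk0]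
    have := Finset.card_pos.mpr ⟨_, this⟩
    omega
  have hSempty : S = ∅ := Finset.card_eq_zero.mp hScard
  have : (d : ℤ) = 0 := by rw [hSempty] at hzero; simpa using hzero
  exact ⟨hk0, by exact_mod_cast this⟩
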